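/- Let A be a complete discrete valuation ring (complete with respect to its maximal-ideal-adic topology) with maximal ideal 𝔭 and fraction field k. Let M be a finite separable extension of k that is unramified over A, let B be the integral closure of A in M (a discrete valuation ring), and let 𝔪 be the maximal ideal of B, so that e(𝔪/𝔭) = 1. Suppose there is α ∈ B such that M = k(α) and the reduction modulo 𝔭 of the minimal polynomial g ∈ A[x] of α over k has no repeated roots in an algebraic closure of A/𝔭. Then B = A[α], i.e., B equals the A-subalgebra of M generated by α. -/

import Mathlib

set_option synthInstance.maxHeartbeats 1000000
set_option maxHeartbeats 1000000

open Polynomial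

theorem traceT {R S : Type*} [CommRing R] [CommRing S] [Nontrivial R] [Nontrivial S]
    (h : R →+* S) {g : R[X]} (hg : g.Monic) (Q : R[X]) :
    h (Algebra.trace R (AdjoinRoot g) (AdjoinRoot.mk g Q)) =
      Algebra.trace S (AdjoinRoot (g.map h)) (AdjoinRoot.mk (g.map h) (Q.map h)) := by
  classical
  have hgS : (g.map h).Monic := hg.map h
  have hdim : (g.map h).natDegree = g.natDegree := hg.natDegree_map h
  let bR := (AdjoinRoot.powerBasisAux' hg)
  let bS := (AdjoinRoot.powerBasisAux' hgS).reindex (finCongr hdim)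
  rw [Algebra.trace_eq_matrix_trace bR, Algebra.trace_eq_matrix_trace bS]
  have key : Algebra.leftMulMatrix bS (AdjoinRoot.mk (g.map h) (Q.map h)) =
      (Algebra.leftMulMatrix bR (AdjoinRoot.mk g Q)).map h := by
    ext i j
    rw [Matrix.map_apply, Algebra.leftMulMatrix_eq_repr_mul, Algebra.leftMulMatrix_eq_repr_mul]
    have hbRj : bR j = AdjoinRoot.mk g (X ^ (j : ℕ)) := by
      show (AdjoinRoot.powerBasis' hg).basis j = _
      rw [PowerBasis.coe_basis]
      show (AdjoinRoot.powerBasis' hg).gen ^ (j : ℕ) = _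
      rw [AdjoinRoot.powerBasis'_gen, ← AdjoinRoot.mk_X, ← map_pow]
    have hbSj : bS j = AdjoinRoot.mk (g.map h) (X ^ (j : ℕ)) := by
      show ((AdjoinRoot.powerBasisAux' hgS).reindex (finCongr hdim)) j = _
      rw [Module.Basis.reindex_apply]
      show (AdjoinRoot.powerBasis' hgS).basis _ = _
      rw [PowerBasis.coe_basis]
      show (AdjoinRoot.powerBasis' hgS).gen ^ _ = _
      rw [AdjoinRoot.powerBasis'_gen, ← AdjoinRoot.mk_X, ← map_pow]
      norm_num
    rw [hbRj, hbSj, ← map_mul, ← map_mul, Module.Basis.repr_reindex]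
    rw [Finsupp.mapDomain_equiv_apply]
    rw [AdjoinRoot.powerBasisAux'_repr_apply_to_fun, AdjoinRoot.powerBasisAux'_repr_apply_to_fun,
      AdjoinRoot.modByMonicHom_mk, AdjoinRoot.modByMonicHom_mk]
    have hmm : map h Q * X ^ (j : ℕ) = (Q * X ^ (j : ℕ)).map h := by simp
    rw [hmm, ← Polynomial.map_modByMonic _ hg, Polynomial.coeff_map]
    norm_num
  rw [key]
  simp [Matrix.trace, Matrix.diag, Matrix.map_apply]


theorem tracePi {R : Type*} [CommRing R] {ι : Type*} [Fintype ι] [DecidableEq ι]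
    (v : ι → R) : Algebra.trace R (ι → R) v = ∑ i, v i := by
  rw [Algebra.trace_eq_matrix_trace (Pi.basisFun R ι) v, Matrix.trace]
  congr 1
  ext i
  rw [Matrix.diag, Algebra.leftMulMatrix_eq_repr_mul]
  simp [Pi.basisFun_apply]

theorem L1 {K : Type*} [Field K] {f : K[X]} (hf : f.Monic) (hsep : f.Separable)
    (hn : f.natDegree ≠ 0) :
    (Algebra.traceMatrix K (fun i : Fin f.natDegree => AdjoinRoot.root f ^ (i : ℕ))).det ≠ 0 := by
  classical
  set n := f.natDegree with hndef
  let Ω := AlgebraicClosure K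
  let σ : K →+* Ω := algebraMap K Ω
  set fΩ : Polynomial Ω := f.map σ with hfΩ
  have hfΩm : fΩ.Monic := hf.map σ
  have hsplit : (f.map σ).Splits := IsAlgClosed.splits _
  have hcard : fΩ.roots.card = n := by
    rw [← hsplit.natDegree_eq_card_roots, hf.natDegree_map σ]
  have hnodup : fΩ.roots.Nodup := nodup_roots (hsep.map)
  set l := fΩ.roots.toList with hldef
  have hlen : l.length = n := by rw [hldef, Multiset.length_toList, hcard]
  have hlnodup : l.Nodup := by
    rw [hldef, ← Multiset.coe_nodup, Multiset.coe_toList]; exact hnodup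
  set ρ : Fin n → Ω := fun i => l.get (Fin.cast hlen.symm i) with hρdef
  have hρinj : Function.Injective ρ := by
    intro a b hab
    have := List.nodup_iff_injective_get.mp hlnodup hab
    simpa [Fin.ext_iff] using this
  have hρroot : ∀ i, fΩ.eval (ρ i) = 0 := by
    intro i
    have hmem : ρ i ∈ fΩ.roots := by
      rw [← Multiset.mem_toList]
      apply List.get_mem
    exact (isRoot_of_mem_roots hmem)
  have haev : ∀ i, aeval (ρ i) fΩ = 0 := by
    intro i
    rw [aeval_def]
    exact hρroot i
  let ψ : ∀ _ : Fin n, AdjoinRoot fΩ →ₐ[Ω] Ω := fun i =>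
    AdjoinRoot.liftAlgHom fΩ (Algebra.ofId Ω Ω) (ρ i) (haev i)
  let Ψ : AdjoinRoot fΩ →ₐ[Ω] (Fin n → Ω) := Pi.algHom _ _ (fun i => ψ i)
  have hfΩdeg : fΩ.natDegree = n := hf.natDegree_map σ
  have hfΩ1 : fΩ ≠ 1 := by
    intro h
    rw [h] at hfΩdeg
    simp [hndef] at hfΩdeg
    exact hn hfΩdeg.symm
  -- injectivity of Ψ
  have hinj : Function.Injective Ψ := by
    rw [injective_iff_map_eq_zero]
    intro y hy
    obtain ⟨P, rfl⟩ := AdjoinRoot.mk_surjective y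
    have hev : ∀ i, (P %ₘ fΩ).eval (ρ i) = 0 := by
      intro i
      have h1 : ψ i (AdjoinRoot.mk fΩ P) = 0 := by
        have := congrFun hy i
        simpa [Ψ] using this
      change AdjoinRoot.liftAlgHom fΩ (Algebra.ofId Ω Ω) (ρ i) (haev i) (AdjoinRoot.mk fΩ P) = 0 at h1
      change aeval (ρ i) P = 0 at h1
      have h2 : P.eval (ρ i) = 0 := by exact h1
      rw [modByMonic_eq_sub_mul_div _ fΩ]
      simp [h2, hρroot i]
    have hP' : P %ₘ fΩ = 0 := by
      by_contra hne
      have hsub : Finset.image ρ Finset.univ ⊆ (P %ₘ fΩ).roots.toFinset := by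
        intro r hr
        obtain ⟨i, _, rfl⟩ := Finset.mem_image.mp hr
        rw [Multiset.mem_toFinset, mem_roots hne]
        exact hev i
      have hc1 : (Finset.image ρ Finset.univ).card = n := by
        rw [Finset.card_image_of_injective _ hρinj, Finset.card_univ, Fintype.card_fin]
      have hc2 : (P %ₘ fΩ).roots.toFinset.card ≤ (P %ₘ fΩ).roots.card :=
        Multiset.toFinset_card_le _
      have hc3 : Multiset.card (P %ₘ fΩ).roots ≤ (P %ₘ fΩ).natDegree :=
        (P %ₘ fΩ).card_roots'
      have hc4 : (P %ₘ fΩ).natDegree < n := by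
        have h5 := natDegree_modByMonic_lt P hfΩm hfΩ1
        rwa [hfΩdeg] at h5
      have hc5 := Finset.card_le_card hsub
      rw [hc1] at hc5
      omega
    rw [← modByMonic_add_div P fΩ, hP', zero_add, map_mul, AdjoinRoot.mk_self, zero_mul]
  -- surjectivity via dimension count
  haveI : Module.Finite Ω (AdjoinRoot fΩ) :=
    Module.Finite.of_basis (AdjoinRoot.powerBasis' hfΩm).basis
  have hfr1 : Module.finrank Ω (AdjoinRoot fΩ) = n := by
    rw [(AdjoinRoot.powerBasis' hfΩm).finrank, AdjoinRoot.powerBasis'_dim, hfΩdeg]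
  have hfr2 : Module.finrank Ω (Fin n → Ω) = n := by
    simp [Module.finrank_pi]
  have hsurj : Function.Surjective Ψ := by
    haveI : FiniteDimensional Ω (AdjoinRoot fΩ) := ‹Module.Finite Ω (AdjoinRoot fΩ)›
    exact (LinearMap.injective_iff_surjective_of_finrank_eq_finrank
      (f := Ψ.toLinearMap) (by rw [hfr1, hfr2])).mp hinj
  let E : AdjoinRoot fΩ ≃ₐ[Ω] (Fin n → Ω) := AlgEquiv.ofBijective Ψ ⟨hinj, hsurj⟩
  -- trace formula
  have htr : ∀ m : ℕ, σ (Algebra.trace K (AdjoinRoot f) (AdjoinRoot.root f ^ m))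
      = ∑ i, (ρ i) ^ m := by
    intro m
    have h1 : AdjoinRoot.root f ^ m = AdjoinRoot.mk f (X ^ m) := by
      rw [map_pow, AdjoinRoot.mk_X]
    rw [h1, traceT σ hf (X ^ m)]
    have h2 : ((X : K[X]) ^ m).map σ = X ^ m := by simp
    rw [h2]
    have h3 : AdjoinRoot.mk fΩ (X ^ m) = AdjoinRoot.root fΩ ^ m := by
      rw [map_pow, AdjoinRoot.mk_X]
    rw [h3, ← Algebra.trace_eq_of_algEquiv E]
    have h4 : E (AdjoinRoot.root fΩ ^ m) = fun i => (ρ i) ^ m := by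
      funext i
      show Ψ (AdjoinRoot.root fΩ ^ m) i = _
      simp [Ψ, ψ, AdjoinRoot.liftAlgHom_root]
    rw [h4, tracePi]
  -- Gram matrix = W * Wᵀ
  let W : Matrix (Fin n) (Fin n) Ω := Matrix.of fun i j => (ρ j) ^ (i : ℕ)
  have hgram : (Algebra.traceMatrix K (fun i : Fin n => AdjoinRoot.root f ^ (i : ℕ))).map σ
      = W * W.transpose := by
    ext i j
    rw [Matrix.map_apply, Algebra.traceMatrix_apply, Algebra.traceForm_apply, ← pow_add,
      htr ((i : ℕ) + (j : ℕ)), Matrix.mul_apply]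
    congr 1
    funext lx
    rw [Matrix.transpose_apply]
    show (ρ lx) ^ ((i:ℕ)+(j:ℕ)) = W i lx * W j lx
    simp [W, pow_add]
  have hWdet : W.det ≠ 0 := by
    have hWt : W.transpose = Matrix.vandermonde ρ := by
      ext i j
      simp [W, Matrix.vandermonde]
    have : W.det = (Matrix.vandermonde ρ).det := by
      rw [← Matrix.det_transpose, hWt]
    rw [this, Matrix.det_vandermonde]
    apply Finset.prod_ne_zero_iff.mpr
    intro i _
    apply Finset.prod_ne_zero_iff.mpr
    intro j hj
    have : i < j := Finset.mem_Ioi.mp hj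
    exact sub_ne_zero.mpr fun h => (Finset.mem_Ioi.mp hj).ne' (hρinj h)
  intro hdet
  have : σ ((Algebra.traceMatrix K (fun i : Fin n => AdjoinRoot.root f ^ (i : ℕ))).det) = 0 := by
    rw [hdet, map_zero]
  rw [RingHom.map_det, RingHom.mapMatrix_apply, hgram, Matrix.det_mul,
    Matrix.det_transpose] at this
  exact hWdet (by rcases mul_eq_zero.mp this with h | h <;> exact h)

theorem detT {R S : Type*} [CommRing R] [CommRing S] [Nontrivial R] [Nontrivial S]
    (h : R →+* S) {g : R[X]} (hg : g.Monic) :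
    h ((Algebra.traceMatrix R (fun i : Fin g.natDegree => AdjoinRoot.root g ^ (i : ℕ))).det)
      = (Algebra.traceMatrix S
          (fun i : Fin (g.map h).natDegree => AdjoinRoot.root (g.map h) ^ (i : ℕ))).det := by
  classical
  have hdim : (g.map h).natDegree = g.natDegree := hg.natDegree_map h
  rw [RingHom.map_det, RingHom.mapMatrix_apply,
    ← Matrix.det_submatrix_equiv_self (finCongr hdim)
      ((Algebra.traceMatrix R (fun i : Fin g.natDegree => AdjoinRoot.root g ^ (i : ℕ))).map h)]
  congr 1
  ext i j
  rw [Matrix.submatrix_apply, Matrix.map_apply, Algebra.traceMatrix_apply,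
    Algebra.traceMatrix_apply, Algebra.traceForm_apply, Algebra.traceForm_apply]
  have h1 : ∀ m : ℕ, AdjoinRoot.root g ^ m = AdjoinRoot.mk g (X ^ m) := fun m => by
    rw [map_pow, AdjoinRoot.mk_X]
  have h2 : ∀ m : ℕ, AdjoinRoot.root (g.map h) ^ m = AdjoinRoot.mk (g.map h) (X ^ m) :=
    fun m => by rw [map_pow, AdjoinRoot.mk_X]
  rw [h1, h1, h2, h2, ← map_mul, ← map_mul, ← pow_add, ← pow_add]
  have h3 : ((X : R[X]) ^ ((i : ℕ) + (j : ℕ))).map h = X ^ ((i : ℕ) + (j : ℕ)) := by simp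
  rw [← h3, ← traceT h hg]
  norm_num

theorem stmt11 (A : Type) [CommRing A] [IsDomain A] [IsDiscreteValuationRing A]
    [IsAdicComplete (IsLocalRing.maximalIdeal A) A]
    (k : Type) [Field k] [Algebra A k] [IsFractionRing A k]
    (M : Type) [Field M] [Algebra k M] [FiniteDimensional k M] [Algebra.IsSeparable k M]
    [Algebra A M] [IsScalarTower A k M]
    (hunram : ∀ 𝔪 : Ideal (integralClosure A M), 𝔪.IsMaximal →
      Ideal.ramificationIdx'
        (IsLocalRing.maximalIdeal A) 𝔪 = 1)
    (α : integralClosure A M)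
    (hgen : IntermediateField.adjoin k {(α : M)} = ⊤)
    (hsep : ((minpoly A (α : M)).map
        (Ideal.Quotient.mk (IsLocalRing.maximalIdeal A))).Separable) :
    integralClosure A M = Algebra.adjoin A {(α : M)} := by
  classical
  have hα : IsIntegral A (α : M) := α.2
  set 𝔭 := IsLocalRing.maximalIdeal A with h𝔭
  letI : Field (A ⧸ 𝔭) := Ideal.Quotient.field 𝔭
  set g := minpoly A (α : M) with hgdef
  have hgmonic : g.Monic := minpoly.monic hα
  have hgk : minpoly k (α : M) = g.map (algebraMap A k) :=
    minpoly.isIntegrallyClosed_eq_field_fractions' k hα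
  set gk := g.map (algebraMap A k) with hgkdef
  have hαk : IsIntegral k (α : M) := IsIntegral.of_finite k _
  have hirr : Irreducible gk := hgk ▸ minpoly.irreducible hαk
  haveI : Fact (Irreducible gk) := ⟨hirr⟩
  have hgkne : gk ≠ 0 := hirr.ne_zero
  have haev : (aeval (α : M)) gk = 0 := by
    have h0 := minpoly.aeval k (α : M)
    rw [hgk] at h0
    exact h0
  let φ : AdjoinRoot gk →ₐ[k] M := AdjoinRoot.liftAlgHom gk (Algebra.ofId k M) (α : M) haev
  have hadj : Algebra.adjoin k {(α : M)} = ⊤ := by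
    have h1 := IntermediateField.adjoin_simple_toSubalgebra_of_isAlgebraic (F := k) hαk.isAlgebraic
    rw [hgen] at h1
    rw [← h1, IntermediateField.top_toSubalgebra]
  have hφsurj : Function.Surjective φ := by
    have hle : Algebra.adjoin k {(α : M)} ≤ φ.range := by
      apply Algebra.adjoin_le
      intro x hx
      rw [Set.mem_singleton_iff] at hx
      refine ⟨AdjoinRoot.root gk, ?_⟩
      rw [hx]
      exact AdjoinRoot.liftAlgHom_root gk (Algebra.ofId k M) (α : M) haev
    rw [hadj] at hle
    intro y
    exact hle (show y ∈ (⊤ : Subalgebra k M) from Algebra.mem_top)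
  have hφinj : Function.Injective φ := RingHom.injective ((φ : AdjoinRoot gk →ₐ[k] M) : AdjoinRoot gk →+* M)
  let E : AdjoinRoot gk ≃ₐ[k] M := AlgEquiv.ofBijective φ ⟨hφinj, hφsurj⟩
  let pb : PowerBasis k M := (AdjoinRoot.powerBasis hgkne).map E
  have hEroot : E (AdjoinRoot.root gk) = (α : M) :=
    AdjoinRoot.liftAlgHom_root gk (Algebra.ofId k M) (α : M) haev
  have hpbgen : pb.gen = (α : M) := by
    show E (AdjoinRoot.powerBasis hgkne).gen = (α : M)
    rw [AdjoinRoot.powerBasis_gen]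
    exact hEroot
  set a : A := (Algebra.traceMatrix A
      (fun i : Fin g.natDegree => AdjoinRoot.root g ^ (i : ℕ))).det with hadef
  -- step 1 : discr k pb.basis = algebraMap A k a
  have hdiscr : Algebra.discr k pb.basis = algebraMap A k a := by
    rw [Algebra.discr_def, hadef, detT (algebraMap A k) hgmonic]
    congr 1
    ext i j
    have hbase : pb.basis i * pb.basis j
        = E (AdjoinRoot.root gk ^ (i : ℕ) * AdjoinRoot.root gk ^ (j : ℕ)) := by
      rw [map_mul, map_pow, map_pow, hEroot, pb.basis_eq_pow i, pb.basis_eq_pow j, hpbgen]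
    rw [Algebra.traceMatrix_apply]
    show Algebra.traceForm k M (pb.basis i) (pb.basis j) = Algebra.traceForm k (AdjoinRoot gk)
      (AdjoinRoot.root gk ^ (i : ℕ)) (AdjoinRoot.root gk ^ (j : ℕ))
    rw [Algebra.traceForm_apply,
      Algebra.traceForm_apply, hbase, Algebra.trace_eq_of_algEquiv E]
  -- step 2 : a is a unit
  have hdeg0 : g.natDegree ≠ 0 := by
    exact (minpoly.natDegree_pos hα).ne'
  have hmkne : Ideal.Quotient.mk 𝔭 a ≠ 0 := by
    rw [hadef, detT (Ideal.Quotient.mk 𝔭) hgmonic]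
    exact L1 (hgmonic.map _) hsep (by rw [hgmonic.natDegree_map]; exact hdeg0)
  have hu : IsUnit a := by
    by_contra hnu
    exact hmkne (Ideal.Quotient.eq_zero_iff_mem.mpr (IsLocalRing.mem_maximalIdeal a |>.mpr hnu))
  -- final
  apply le_antisymm
  · intro z hz
    have hint : IsIntegral A pb.gen := by rw [hpbgen]; exact hα
    have hmem := Algebra.discr_mul_isIntegral_mem_adjoin (R := A) (K := k) (L := M)
      (B := pb) hint (z := z) hz
    rw [hpbgen, hdiscr, algebraMap_smul] at hmem
    obtain ⟨v, hv⟩ := hu.exists_left_inv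
    have hz' : z = v • a • z := by rw [smul_smul, hv, one_smul]
    rw [hz']
    exact Subalgebra.smul_mem _ hmem v
  · exact Algebra.adjoin_le (Set.singleton_subset_iff.mpr α.2)
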